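/- The topological group S_∞ of all permutations of ℤ with the topology of pointwise convergence is not extremely amenable. Specifically, for any right-invariant metric d on S_∞ generating this topology, partition S_∞ into A = {σ : σ⁻¹(0) < σ⁻¹(1)} and B = S_∞ \ A; then neither A nor B is essential for the left-translation action, witnessed by the pair of elements {e, τ} where τ is the transposition of 0 and 1. -/
import Mathlib


open Metric Pointwise

/-- `S_∞`, the group of all permutations of `ℤ` with the topology of pointwise
convergence, does not have the concentration property for its action on itself by
left translations with respect to any compatible right-invariant metric: partitioning
`S_∞` into `A = {σ : σ⁻¹(0) < σ⁻¹(1)}` and its complement `B`, neither `A` nor `B`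
is essential, as witnessed by the pair `{e, τ}` with `τ` the transposition of `0`
and `1`: some `ε`-neighbourhood of each piece is disjoint from its `τ`-translate. -/
theorem sInfty_not_concentration (m : MetricSpace (Equiv.Perm ℤ))
    (hinv : ∀ x y a : Equiv.Perm ℤ, m.toDist.dist (x * a) (y * a) = m.toDist.dist x y)
    (htop : m.toUniformSpace.toTopologicalSpace =
      TopologicalSpace.induced (fun σ : Equiv.Perm ℤ => (σ : ℤ → ℤ)) inferInstance) :
    letI := m
    let τ : Equiv.Perm ℤ := Equiv.swap 0 1
    let A : Set (Equiv.Perm ℤ) := {σ | σ.symm 0 < σ.symm 1}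
    let B : Set (Equiv.Perm ℤ) := Aᶜ
    ∃ ε > (0 : ℝ),
      thickening ε A ∩ τ • thickening ε A = ∅ ∧
      thickening ε B ∩ τ • thickening ε B = ∅ := by
  letI := m
  intro τ A B
  -- the set of permutations fixing 0 and 1 is open
  have hT : IsOpen {f : ℤ → ℤ | f 0 = 0 ∧ f 1 = 1} := by
    have heq : {f : ℤ → ℤ | f 0 = 0 ∧ f 1 = 1}
        = (fun f : ℤ → ℤ => f 0) ⁻¹' {0} ∩ (fun f : ℤ → ℤ => f 1) ⁻¹' {1} := by
      ext f; simp [Set.mem_setOf_eq]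
    rw [heq]
    exact (((continuous_apply (0:ℤ)).isOpen_preimage _ (isOpen_discrete _))).inter
      (((continuous_apply (1:ℤ)).isOpen_preimage _ (isOpen_discrete _)))
  have hS : IsOpen {σ : Equiv.Perm ℤ | σ 0 = 0 ∧ σ 1 = 1} := by
    have : @IsOpen _ (TopologicalSpace.induced (fun σ : Equiv.Perm ℤ => (σ : ℤ → ℤ)) inferInstance)
        ((fun σ : Equiv.Perm ℤ => (σ : ℤ → ℤ)) ⁻¹' {f : ℤ → ℤ | f 0 = 0 ∧ f 1 = 1}) :=
      isOpen_induced hT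
    rw [← htop] at this
    exact this
  have h1 : (1 : Equiv.Perm ℤ) ∈ {σ : Equiv.Perm ℤ | σ 0 = 0 ∧ σ 1 = 1} := by
    simp [Set.mem_setOf_eq]
  obtain ⟨ε, hε, hball⟩ := Metric.isOpen_iff.mp hS 1 h1
  refine ⟨ε, hε, ?_, ?_⟩
  -- key: if dist x y < ε then x.symm and y.symm agree at 0 and 1
  all_goals
    have key : ∀ x y : Equiv.Perm ℤ, dist x y < ε →
        x.symm 0 = y.symm 0 ∧ x.symm 1 = y.symm 1 := by
      intro x y hxy
      have hd : dist (x * y⁻¹) 1 < ε := by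
        have := hinv x y y⁻¹
        rw [mul_inv_cancel] at this
        rw [this]; exact hxy
      have hmem := hball (Metric.mem_ball.mpr hd)
      obtain ⟨h0, h1'⟩ := hmem
      constructor
      · have : x (y.symm 0) = 0 := h0
        exact (Equiv.symm_apply_eq x).mpr this.symm
      · have : x (y.symm 1) = 1 := h1'
        exact (Equiv.symm_apply_eq x).mpr this.symm
  · -- A case
    have hAsub : thickening ε A ⊆ A := by
      intro x hx
      obtain ⟨y, hyA, hxy⟩ := Metric.mem_thickening_iff.mp hx
      obtain ⟨e0, e1⟩ := key x y hxy
      simpa [A, Set.mem_setOf_eq, e0, e1] using hyA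
    ext x
    simp only [Set.mem_inter_iff, Set.mem_empty_iff_false, iff_false]
    rintro ⟨hx1, hx2⟩
    have hxA : x ∈ A := hAsub hx1
    have hx2' : τ⁻¹ • x ∈ thickening ε A :=
      (Set.mem_smul_set_iff_inv_smul_mem).mp hx2
    have hxA' : τ⁻¹ * x ∈ A := hAsub hx2'
    have h0 : (τ⁻¹ * x).symm 0 = x.symm 1 := by
      simp [τ, Equiv.Perm.mul_apply, Equiv.symm_apply_eq, Equiv.swap_apply_left]
    have h1' : (τ⁻¹ * x).symm 1 = x.symm 0 := by
      simp [τ, Equiv.Perm.mul_apply, Equiv.symm_apply_eq, Equiv.swap_apply_right]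
    have : x.symm 1 < x.symm 0 := by
      have := hxA'
      simp only [A, Set.mem_setOf_eq] at this
      rwa [h0, h1'] at this
    exact absurd hxA (by simp only [A, Set.mem_setOf_eq]; omega)
  · -- B case
    have hBsub : thickening ε B ⊆ B := by
      intro x hx
      obtain ⟨y, hyB, hxy⟩ := Metric.mem_thickening_iff.mp hx
      obtain ⟨e0, e1⟩ := key x y hxy
      simp only [B, A, Set.mem_compl_iff, Set.mem_setOf_eq] at hyB ⊢
      omega
    ext x
    simp only [Set.mem_inter_iff, Set.mem_empty_iff_false, iff_false]
    rintro ⟨hx1, hx2⟩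
    have hxB : x ∈ B := hBsub hx1
    have hx2' : τ⁻¹ • x ∈ thickening ε B :=
      (Set.mem_smul_set_iff_inv_smul_mem).mp hx2
    have hxB' : τ⁻¹ * x ∈ B := hBsub hx2'
    have h0 : (τ⁻¹ * x).symm 0 = x.symm 1 := by
      simp [τ, Equiv.Perm.mul_apply, Equiv.symm_apply_eq, Equiv.swap_apply_left]
    have h1' : (τ⁻¹ * x).symm 1 = x.symm 0 := by
      simp [τ, Equiv.Perm.mul_apply, Equiv.symm_apply_eq, Equiv.swap_apply_right]
    have hne : x.symm 0 ≠ x.symm 1 := by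
      intro h
      have := x.symm.injective h
      norm_num at this
    simp only [B, A, Set.mem_compl_iff, Set.mem_setOf_eq, h0, h1'] at hxB hxB'
    omega
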